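/- Every vertex of the cycle graph C_11 on 11 vertices is a Šoltés vertex; that is, for every vertex v of C_11, the graph C_11 − v (a path on 10 vertices) is connected and W(C_11 − v) = W(C_11) = 165. -/
import Mathlib


open SimpleGraph Finset

/-- A `Fintype` instance for the vertex set of a vertex-deleted subgraph. -/
noncomputable instance instFintypeNe {V : Type*} [Fintype V] (v : V) :
    Fintype {u : V // u ≠ v} :=
  (Set.toFinite {u : V | u ≠ v}).fintype

/-- The graph obtained from `G` by deleting the vertex `v` (an induced subgraph). -/
def deleteVertex {V : Type*} (G : SimpleGraph V) (v : V) :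
    SimpleGraph {u : V // u ≠ v} :=
  G.induce {u : V | u ≠ v}

/-- The Wiener index of a finite simple graph: the sum of distances over all
unordered pairs of vertices. -/
noncomputable def wiener {V : Type*} [Fintype V] (G : SimpleGraph V) : ℕ :=
  (∑ u : V, ∑ v : V, G.dist u v) / 2

/-- `v` is a Šoltés vertex of `G` if `G - v` is connected and has the same Wiener index. -/
def IsSoltes {V : Type*} [Fintype V] (G : SimpleGraph V) (v : V) : Prop :=
  (deleteVertex G v).Connected ∧ wiener (deleteVertex G v) = wiener G

/-- A graph is cubic (3-regular) if every vertex has exactly 3 neighbours. -/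
def IsCubic {V : Type*} (G : SimpleGraph V) : Prop :=
  ∀ v : V, (G.neighborSet v).ncard = 3

/-- A finite graph is 2-connected if it is connected, has at least 3 vertices,
and stays connected after deleting any one vertex. -/
def TwoConnected {V : Type*} [Fintype V] (G : SimpleGraph V) : Prop :=
  G.Connected ∧ 3 ≤ Fintype.card V ∧ ∀ v : V, (deleteVertex G v).Connected

section Ball
variable {V : Type*} [Fintype V] [DecidableEq V]

/-- The ball of radius `n` around `u` in a graph (computable). -/
def gball (G : SimpleGraph V) [DecidableRel G.Adj] (u : V) : ℕ → Finset V
  | 0 => {u}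
  | n + 1 => (gball G u n).biUnion fun x => insert x (Finset.univ.filter (G.Adj x))

lemma mem_gball_iff (G : SimpleGraph V) [DecidableRel G.Adj] (u : V) :
    ∀ (n : ℕ) (w : V), w ∈ gball G u n ↔ ∃ p : G.Walk w u, p.length ≤ n := by
  intro n
  induction n with
  | zero =>
    intro w
    simp only [gball, Finset.mem_singleton]
    constructor
    · rintro rfl; exact ⟨SimpleGraph.Walk.nil, by simp⟩
    · rintro ⟨p, hp⟩
      exact (SimpleGraph.Walk.eq_of_length_eq_zero (Nat.le_zero.mp hp))
  | succ n ih =>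
    intro w
    simp only [gball, Finset.mem_biUnion, Finset.mem_insert, Finset.mem_filter,
      Finset.mem_univ, true_and]
    constructor
    · rintro ⟨x, hx, rfl | hadj⟩
      · obtain ⟨p, hp⟩ := (ih _).mp hx
        exact ⟨p, hp.trans (Nat.le_succ n)⟩
      · obtain ⟨p, hp⟩ := (ih _).mp hx
        exact ⟨SimpleGraph.Walk.cons hadj.symm p, by simpa using hp⟩
    · rintro ⟨p, hp⟩
      by_cases hlen : p.length ≤ n
      · exact ⟨w, (ih _).mpr ⟨p, hlen⟩, Or.inl rfl⟩
      · cases p with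
        | nil => simp at hlen
        | cons h q =>
          refine ⟨_, (ih _).mpr ⟨q, ?_⟩, Or.inr h.symm⟩
          simp only [SimpleGraph.Walk.length_cons] at hp
          omega

lemma dist_eq_of_gball (G : SimpleGraph V) [DecidableRel G.Adj] {u v : V} {n : ℕ}
    (h1 : v ∈ gball G u n) (h2 : n ≠ 0 → v ∉ gball G u (n - 1)) :
    G.dist u v = n := by
  obtain ⟨p, hp⟩ := (mem_gball_iff G u n v).mp h1
  rw [SimpleGraph.dist_comm]
  have hle : G.dist v u ≤ n := (SimpleGraph.dist_le p).trans hp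
  rcases Nat.lt_or_ge (G.dist v u) n with h | h
  · exfalso
    obtain ⟨q, hq⟩ := (Reachable.exists_walk_length_eq_dist ⟨p⟩ : ∃ q : G.Walk v u, _)
    exact h2 (by omega) ((mem_gball_iff G u (n - 1) v).mpr ⟨q, by omega⟩)
  · omega

end Ball

section Iso
variable {V W : Type*} {G : SimpleGraph V} {G' : SimpleGraph W}

lemma iso_dist_le (e : G ≃g G') (u v : V) : G'.dist (e u) (e v) ≤ G.dist u v := by
  by_cases h : G.Reachable u v
  · obtain ⟨p, hp⟩ := h.exists_walk_length_eq_dist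
    calc G'.dist (e u) (e v) ≤ (p.map e.toHom).length := SimpleGraph.dist_le _
      _ = G.dist u v := by rw [SimpleGraph.Walk.length_map, hp]
  · have h' : ¬G'.Reachable (e u) (e v) := fun hr => h (by simpa using hr.map e.symm.toHom)
    simp [SimpleGraph.dist_eq_zero_of_not_reachable h,
      SimpleGraph.dist_eq_zero_of_not_reachable h']

lemma iso_dist (e : G ≃g G') (u v : V) : G'.dist (e u) (e v) = G.dist u v :=
  le_antisymm (iso_dist_le e u v) (by simpa using iso_dist_le e.symm (e u) (e v))

lemma wiener_eq_of_iso [Fintype V] [Fintype W] (e : G ≃g G') : wiener G = wiener G' := by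
  unfold wiener
  congr 1
  rw [← Equiv.sum_comp e.toEquiv (fun w => ∑ w2 : W, G'.dist w w2)]
  refine Finset.sum_congr rfl fun u _ => ?_
  rw [← Equiv.sum_comp e.toEquiv (fun w2 => G'.dist (e.toEquiv u) w2)]
  exact Finset.sum_congr rfl fun v _ => (iso_dist e u v).symm

end Iso

/-- The cyclic distance function on `Fin 11`. -/
def cd (u v : Fin 11) : ℕ := min (v - u).val (u - v).val

/-- The path distance function on `Fin 10`. -/
def pd (u v : Fin 10) : ℕ := max u.val v.val - min u.val v.val

lemma cycle11_dist (u v : Fin 11) : (cycleGraph 11).dist u v = cd u v := by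
  apply dist_eq_of_gball
  · exact (by decide : ∀ u v : Fin 11, v ∈ gball (cycleGraph 11) u (cd u v)) u v
  · exact (by decide :
      ∀ u v : Fin 11, cd u v ≠ 0 → v ∉ gball (cycleGraph 11) u (cd u v - 1)) u v

instance : DecidableRel (pathGraph 10).Adj :=
  fun _ _ => decidable_of_iff _ pathGraph_adj.symm

lemma path10_dist (u v : Fin 10) : (pathGraph 10).dist u v = pd u v := by
  apply dist_eq_of_gball
  · exact (by decide : ∀ u v : Fin 10, v ∈ gball (pathGraph 10) u (pd u v)) u v
  · exact (by decide :
      ∀ u v : Fin 10, pd u v ≠ 0 → v ∉ gball (pathGraph 10) u (pd u v - 1)) u v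

lemma wiener_cycle11 : wiener (cycleGraph 11) = 165 := by
  unfold wiener
  have h : (∑ u : Fin 11, ∑ v : Fin 11, (cycleGraph 11).dist u v)
      = ∑ u : Fin 11, ∑ v : Fin 11, cd u v :=
    Finset.sum_congr rfl fun u _ => Finset.sum_congr rfl fun v _ => cycle11_dist u v
  rw [h, (by decide : (∑ u : Fin 11, ∑ v : Fin 11, cd u v) = 330)]

lemma wiener_path10 : wiener (pathGraph 10) = 165 := by
  unfold wiener
  have h : (∑ u : Fin 10, ∑ v : Fin 10, (pathGraph 10).dist u v)
      = ∑ u : Fin 10, ∑ v : Fin 10, pd u v :=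
    Finset.sum_congr rfl fun u _ => Finset.sum_congr rfl fun v _ => path10_dist u v
  rw [h, (by decide : (∑ u : Fin 10, ∑ v : Fin 10, pd u v) = 330)]

/-- Forward map of the equivalence between `Fin 11` minus a vertex and `Fin 10`. -/
def dF (v : Fin 11) (u : {u : Fin 11 // u ≠ v}) : Fin 10 :=
  ⟨(u.1 - v).val - 1, by have := (u.1 - v).isLt; omega⟩

/-- Backward map of the equivalence between `Fin 11` minus a vertex and `Fin 10`. -/
def dG (v : Fin 11) (i : Fin 10) : {u : Fin 11 // u ≠ v} :=
  ⟨v + ⟨i.val + 1, by have := i.isLt; omega⟩, by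
    intro h
    apply_fun Fin.val at h
    rw [Fin.val_add] at h
    have := v.isLt; have := i.isLt
    simp only [Fin.val_mk] at h
    omega⟩

/-- The equivalence between `Fin 11` minus a vertex and `Fin 10`. -/
def delEquiv (v : Fin 11) : {u : Fin 11 // u ≠ v} ≃ Fin 10 where
  toFun := dF v
  invFun := dG v
  left_inv u := by
    apply Subtype.ext
    apply Fin.ext
    have hne : u.1.val ≠ v.val := fun h => u.2 (Fin.ext h)
    have h1 := u.1.isLt; have h2 := v.isLt
    simp only [dF, dG, Fin.val_add, Fin.sub_def, Fin.val_mk]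
    omega
  right_inv i := by
    apply Fin.ext
    have h1 := i.isLt; have h2 := v.isLt
    simp only [dF, dG, Fin.sub_def, Fin.val_add, Fin.val_mk]
    omega

/-- The vertex-deleted cycle `C₁₁ − v` is isomorphic to the path graph on 10 vertices. -/
def delIso (v : Fin 11) : deleteVertex (cycleGraph 11) v ≃g pathGraph 10 where
  toEquiv := delEquiv v
  map_rel_iff' := by
    intro a b
    have hane : a.1.val ≠ v.val := fun h => a.2 (Fin.ext h)
    have hbne : b.1.val ≠ v.val := fun h => b.2 (Fin.ext h)
    have h1 := a.1.isLt; have h2 := b.1.isLt; have h3 := v.isLt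
    show (pathGraph 10).Adj (delEquiv v a) (delEquiv v b) ↔ (cycleGraph 11).Adj a.1 b.1
    rw [pathGraph_adj, cycleGraph_adj']
    simp only [delEquiv, Equiv.coe_fn_mk, dF, Fin.val_mk, Fin.sub_def]
    omega

/-- Every vertex of the cycle `C₁₁` is a Šoltés vertex:
`W(C₁₁) = 165` and for every vertex `v`, `C₁₁ − v` is connected with
`W(C₁₁ − v) = W(C₁₁)`. -/
theorem cycleGraph_eleven_all_vertices_soltes :
    wiener (cycleGraph 11) = 165 ∧
    ∀ v : Fin 11,
      (deleteVertex (cycleGraph 11) v).Connected ∧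
      wiener (deleteVertex (cycleGraph 11) v) = wiener (cycleGraph 11) := by
  refine ⟨wiener_cycle11, fun v => ⟨?_, ?_⟩⟩
  · exact ((delIso v).connected_iff).mpr (pathGraph_connected 9)
  · rw [wiener_eq_of_iso (delIso v), wiener_path10, wiener_cycle11]
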